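/- If b_p is a bipotential on Sym(n) × Sym(n), then for any Δt > 0 and fixed σ_k ∈ Sym(n), the function b_{p,k}(Δε, Δσ) := Δt · b_p((1/Δt)Δε, σ_k + Δσ) − ⟨Δε, σ_k⟩ is again a bipotential, and the relation (1/Δt)Δε ∈ ∂b_p((1/Δt)Δε, ·)(σ_k + Δσ) holds if and only if Δε ∈ ∂b_{p,k}(Δε, ·)(Δσ). -/

import Mathlib

open scoped Classical
noncomputable section

def ERealConvexOn {X : Type*} [AddCommGroup X] [Module ℝ X] (f : X → EReal) : Prop :=
  ∀ x z : X, ∀ t : ℝ, 0 ≤ t → t ≤ 1 →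
    f (t • x + (1 - t) • z) ≤ (t : EReal) * f x + ((1 - t) : EReal) * f z

def SubdiffFst {X Y : Type*} [AddCommGroup X] [Module ℝ X] [AddCommGroup Y] [Module ℝ Y]
    (pair : X →ₗ[ℝ] Y →ₗ[ℝ] ℝ) (f : X → EReal) (x : X) : Set Y :=
  {y | ∀ z, ((pair (z - x) y : ℝ) : EReal) ≤ f z - f x}

def SubdiffSnd {X Y : Type*} [AddCommGroup X] [Module ℝ X] [AddCommGroup Y] [Module ℝ Y]
    (pair : X →ₗ[ℝ] Y →ₗ[ℝ] ℝ) (g : Y → EReal) (y : Y) : Set X :=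
  {x | ∀ w, ((pair x (w - y) : ℝ) : EReal) ≤ g w - g y}

structure IsBipotential {X Y : Type*} [AddCommGroup X] [Module ℝ X] [TopologicalSpace X]
    [AddCommGroup Y] [Module ℝ Y] [TopologicalSpace Y]
    (pair : X →ₗ[ℝ] Y →ₗ[ℝ] ℝ) (b : X → Y → EReal) : Prop where
  ne_bot : ∀ x y, b x y ≠ ⊥
  convex_lsc_fst : ∀ y, (∃ x, b x y ≠ ⊤) →
    ERealConvexOn (fun x => b x y) ∧ LowerSemicontinuous (fun x => b x y)
  convex_lsc_snd : ∀ x, (∃ y, b x y ≠ ⊤) →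
    ERealConvexOn (b x) ∧ LowerSemicontinuous (b x)
  ge_pair : ∀ x y, ((pair x y : ℝ) : EReal) ≤ b x y
  subdiff_iff₁ : ∀ x y,
    y ∈ SubdiffFst pair (fun x' => b x' y) x ↔ x ∈ SubdiffSnd pair (b x) y
  subdiff_iff₂ : ∀ x y,
    x ∈ SubdiffSnd pair (b x) y ↔ b x y = ((pair x y : ℝ) : EReal)

structure IsSync {X Y : Type*} [AddCommGroup X] [Module ℝ X] [TopologicalSpace X]
    [AddCommGroup Y] [Module ℝ Y] [TopologicalSpace Y] (c : X → Y → EReal) : Prop where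
  nonneg : ∀ x y, 0 ≤ c x y
  convex_lsc_fst : ∀ y, (∃ x, c x y ≠ ⊤) →
    ERealConvexOn (fun x => c x y) ∧ LowerSemicontinuous (fun x => c x y)
  convex_lsc_snd : ∀ x, (∃ y, c x y ≠ ⊤) →
    ERealConvexOn (c x) ∧ LowerSemicontinuous (c x)
  min_snd : ∀ x, (∃ y, c x y ≠ ⊤) → ∀ y₀, (∀ y, c x y₀ ≤ c x y) → c x y₀ = 0
  min_fst : ∀ y, (∃ x, c x y ≠ ⊤) → ∀ x₀, (∀ x, c x₀ y ≤ c x y) → c x₀ y = 0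


/-- The submodule of symmetric `n × n` real matrices. -/
def SymMat (n : ℕ) : Submodule ℝ (Matrix (Fin n) (Fin n) ℝ) where
  carrier := {A | A.IsSymm}
  add_mem' := fun ha hb => ha.add hb
  zero_mem' := Matrix.isSymm_zero
  smul_mem' := fun c _ h => h.smul c

/-- The duality product `⟨ε, σ⟩ = tr(εσ)` on symmetric matrices. -/
def symPair (n : ℕ) : ↥(SymMat n) →ₗ[ℝ] ↥(SymMat n) →ₗ[ℝ] ℝ :=
  LinearMap.mk₂ ℝ (fun a b => ((a : Matrix (Fin n) (Fin n) ℝ) * (b : Matrix (Fin n) (Fin n) ℝ)).trace)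
    (by intro a a' b; simp [Matrix.add_mul, Matrix.trace_add])
    (by intro c a b; simp [Matrix.smul_mul, Matrix.trace_smul])
    (by intro a b b'; simp [Matrix.mul_add, Matrix.trace_add])
    (by intro c a b; simp [Matrix.mul_smul, Matrix.trace_smul])
namespace ETmp

lemma cmul_cancel {c : ℝ} (hc : 0 < c) (a : EReal) :
    ((1/c : ℝ) : EReal) * ((c : EReal) * a) = a := by
  rw [← mul_assoc, ← EReal.coe_mul, one_div, inv_mul_cancel₀ hc.ne', EReal.coe_one, one_mul]

lemma cmul_le_cmul {c : ℝ} (hc : 0 < c) {a b : EReal} :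
    (c : EReal) * a ≤ (c : EReal) * b ↔ a ≤ b := by
  constructor
  · intro h
    have := mul_le_mul_of_nonneg_left h
      (by exact_mod_cast (by positivity : (0:ℝ) ≤ 1/c) : (0:EReal) ≤ ((1/c : ℝ) : EReal))
    rwa [cmul_cancel hc, cmul_cancel hc] at this
  · intro h
    exact mul_le_mul_of_nonneg_left h (by exact_mod_cast hc.le)

lemma cmul_lt_cmul {c : ℝ} (hc : 0 < c) {a b : EReal} :
    (c : EReal) * a < (c : EReal) * b ↔ a < b := by
  simp only [lt_iff_le_not_ge, cmul_le_cmul hc]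

lemma cmul_inj {c : ℝ} (hc : 0 < c) {a b : EReal} :
    (c : EReal) * a = (c : EReal) * b ↔ a = b := by
  simp only [le_antisymm_iff, cmul_le_cmul hc]

lemma cmul_ne_bot {c : ℝ} (hc : 0 < c) {a : EReal} (ha : a ≠ ⊥) :
    (c : EReal) * a ≠ ⊥ := by
  induction a with
  | bot => exact absurd rfl ha
  | coe a => rw [← EReal.coe_mul]; exact EReal.coe_ne_bot _
  | top => rw [EReal.coe_mul_top_of_pos hc]; simp

lemma cmul_eq_top {c : ℝ} (hc : 0 < c) {a : EReal} :
    (c : EReal) * a = ⊤ ↔ a = ⊤ := by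
  induction a with
  | bot => simp [EReal.coe_mul_bot_of_pos hc]
  | coe a => simp [← EReal.coe_mul]
  | top => simp [EReal.coe_mul_top_of_pos hc]

lemma sub_real_ne_bot {a : EReal} (ha : a ≠ ⊥) (d : ℝ) : a - (d : EReal) ≠ ⊥ := by
  induction a with
  | bot => exact absurd rfl ha
  | coe a => rw [← EReal.coe_sub]; exact EReal.coe_ne_bot _
  | top => rw [EReal.top_sub_coe]; simp

lemma sub_real_eq_top {a : EReal} (d : ℝ) : a - (d : EReal) = ⊤ ↔ a = ⊤ := by
  induction a with
  | bot => simp [EReal.bot_sub]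
  | coe a => simp [← EReal.coe_sub]
  | top => simp [EReal.top_sub_coe]

lemma cmul_sub_real {c : ℝ} (hc : 0 ≤ c) (a : EReal) (d : ℝ) :
    (c : EReal) * (a - (d : EReal)) = (c : EReal) * a - ((c * d : ℝ) : EReal) := by
  rcases hc.eq_or_lt with rfl | hc
  · simp
  induction a with
  | bot => simp [EReal.bot_sub, EReal.coe_mul_bot_of_pos hc]
  | coe a => rw [← EReal.coe_sub, ← EReal.coe_mul, ← EReal.coe_mul, ← EReal.coe_sub,
      mul_sub]
  | top => rw [EReal.top_sub_coe, EReal.coe_mul_top_of_pos hc, EReal.top_sub_coe]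

lemma sub_sub_real (a : EReal) (d e : ℝ) :
    a - (d : EReal) - (e : EReal) = a - ((d + e : ℝ) : EReal) := by
  induction a with
  | bot => rw [EReal.bot_sub, EReal.bot_sub, EReal.bot_sub]
  | coe a => rw [← EReal.coe_sub, ← EReal.coe_sub, ← EReal.coe_sub, sub_sub]
  | top => rw [EReal.top_sub_coe, EReal.top_sub_coe, EReal.top_sub_coe]

lemma real_le_sub_real {p v : ℝ} {a : EReal} :
    (p : EReal) ≤ a - (v : EReal) ↔ ((p + v : ℝ) : EReal) ≤ a := by
  rw [EReal.le_sub_iff_add_le (Or.inl (EReal.coe_ne_bot v)) (Or.inl (EReal.coe_ne_top v)),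
    ← EReal.coe_add]

lemma real_lt_sub_real {p v : ℝ} {a : EReal} :
    (p : EReal) < a - (v : EReal) ↔ ((p + v : ℝ) : EReal) < a := by
  rw [EReal.lt_sub_iff_add_lt (Or.inl (EReal.coe_ne_bot v)) (Or.inl (EReal.coe_ne_top v)),
    ← EReal.coe_add]

lemma sub_real_inj {a b : EReal} (d : ℝ) :
    a - (d : EReal) = b - (d : EReal) ↔ a = b := by
  constructor
  · intro h
    have : a - (d:EReal) + (d:EReal) = b - (d:EReal) + (d:EReal) := by rw [h]
    rwa [EReal.sub_add_cancel, EReal.sub_add_cancel] at this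
  · intro h; rw [h]

lemma sub_le_sub_real {a b : EReal} (h : a ≤ b) (d : ℝ) :
    a - (d : EReal) ≤ b - (d : EReal) := by
  rw [sub_eq_add_neg, sub_eq_add_neg]
  exact add_le_add_left h _

lemma cmul_add {c : ℝ} (hc : 0 < c) {u v : EReal} (hu : u ≠ ⊥) (hv : v ≠ ⊥) :
    (c : EReal) * (u + v) = (c : EReal) * u + (c : EReal) * v := by
  induction u with
  | bot => exact absurd rfl hu
  | coe u =>
    induction v with
    | bot => exact absurd rfl hv
    | coe v => rw [← EReal.coe_add, ← EReal.coe_mul, ← EReal.coe_mul, ← EReal.coe_mul,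
        ← EReal.coe_add, mul_add]
    | top => rw [EReal.add_top_of_ne_bot (EReal.coe_ne_bot u), EReal.coe_mul_top_of_pos hc,
        ← EReal.coe_mul, EReal.add_top_of_ne_bot (EReal.coe_ne_bot _)]
  | top =>
    induction v with
    | bot => exact absurd rfl hv
    | coe v => rw [EReal.top_add_of_ne_bot (EReal.coe_ne_bot v), EReal.coe_mul_top_of_pos hc,
        ← EReal.coe_mul, EReal.top_add_of_ne_bot (EReal.coe_ne_bot _)]
    | top => rw [EReal.top_add_top, EReal.coe_mul_top_of_pos hc, EReal.top_add_top]

lemma tmul_ne_bot {t : ℝ} (ht : 0 ≤ t) {a : EReal} (ha : a ≠ ⊥) :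
    (t : EReal) * a ≠ ⊥ := by
  rcases ht.eq_or_lt with rfl | ht
  · simp
  · exact cmul_ne_bot ht ha

lemma add_sub_add (P Q : EReal) (p q : ℝ) :
    (P - (p : EReal)) + (Q - (q : EReal)) = (P + Q) - ((p + q : ℝ) : EReal) := by
  rw [sub_eq_add_neg, sub_eq_add_neg, sub_eq_add_neg, EReal.coe_add, EReal.neg_add
    (Or.inl (EReal.coe_ne_bot p)) (Or.inl (EReal.coe_ne_top p))]
  · exact add_add_add_comm P _ Q _

end ETmp

namespace ETmp2
open ETmp

lemma coe_smul_comm (a b : ℝ) (E : EReal) :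
    (a : EReal) * ((b : EReal) * E) = (b : EReal) * ((a : EReal) * E) := by
  rw [← mul_assoc, mul_comm ((a:ℝ):EReal) ((b:ℝ):EReal), mul_assoc]

lemma shift_iff {Δt β : ℝ} (hΔt : 0 < Δt) {U B : EReal} {p q v : ℝ}
    (hU : U = (Δt : EReal) * B) (hre : p + v = Δt * (q + β)) :
    ((p : EReal) ≤ U - (v : EReal) ↔ (q : EReal) ≤ B - (β : EReal)) := by
  rw [real_le_sub_real, real_le_sub_real, hre, hU, EReal.coe_mul, cmul_le_cmul hΔt]

lemma lsc_cmul {X : Type*} [TopologicalSpace X] {c : ℝ} (hc : 0 < c) {F : X → EReal}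
    (hF : LowerSemicontinuous F) : LowerSemicontinuous fun x => (c : EReal) * F x := by
  have hcy : ∀ y : EReal, (c : EReal) * (((1/c : ℝ) : EReal) * y) = y := by
    intro y
    rw [← mul_assoc, ← EReal.coe_mul, mul_one_div, div_self hc.ne', EReal.coe_one, one_mul]
  intro x y hy
  have h1 : ((1/c : ℝ) : EReal) * y < F x := by
    have := (cmul_lt_cmul (by positivity : (0:ℝ) < 1/c)).mpr hy
    rwa [cmul_cancel hc] at this
  filter_upwards [hF x _ h1] with z hz
  have := (cmul_lt_cmul hc).mpr hz
  rwa [hcy] at this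

lemma lsc_sub_cont {X : Type*} [TopologicalSpace X] {F : X → EReal} {h : X → ℝ}
    (hF : LowerSemicontinuous F) (hFb : ∀ z, F z ≠ ⊥) (hh : Continuous h) :
    LowerSemicontinuous fun z => F z - ((h z : ℝ) : EReal) := by
  intro x y hy
  rcases eq_or_ne y ⊥ with rfl | hyb
  · exact Filter.Eventually.of_forall fun z => bot_lt_iff_ne_bot.mpr (sub_real_ne_bot (hFb z) _)
  have hyt : y ≠ ⊤ := (hy.trans_le le_top).ne
  lift y to ℝ using ⟨hyt, hyb⟩
  change (y : EReal) < F x - ((h x : ℝ) : EReal) at hy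
  rw [real_lt_sub_real] at hy
  obtain ⟨q, hq1, hq2⟩ := exists_between hy
  have hqt : q ≠ ⊤ := (hq2.trans_le le_top).ne
  have hqb : q ≠ ⊥ := (bot_le.trans_lt hq1).ne'
  lift q to ℝ using ⟨hqt, hqb⟩
  have hq1' : y + h x < q := by exact_mod_cast hq1
  have ev2 : ∀ᶠ z in nhds x, h z < q - y :=
    (hh.tendsto x).eventually_lt_const (by linarith)
  filter_upwards [hF x _ hq2, ev2] with z h1 h2
  show (y : EReal) < F z - ((h z : ℝ) : EReal)
  rw [real_lt_sub_real]
  calc ((y + h z : ℝ) : EReal) < (q : EReal) := by exact_mod_cast (by linarith : y + h z < q)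
    _ < F z := h1

lemma convex_transform {X Y : Type*} [AddCommGroup X] [Module ℝ X] [AddCommGroup Y] [Module ℝ Y]
    (f : Y → EReal) (hf : ERealConvexOn f) (hfb : ∀ y, f y ≠ ⊥)
    {c : ℝ} (hc : 0 < c) (T : X → Y)
    (hT : ∀ x z : X, ∀ t : ℝ, T (t • x + (1-t) • z) = t • T x + (1-t) • T z)
    (ℓ : X → ℝ) (hℓ : ∀ x z : X, ∀ t : ℝ, ℓ (t • x + (1-t) • z) = t * ℓ x + (1-t) * ℓ z) :
    ERealConvexOn (fun x => (c : EReal) * f (T x) - ((ℓ x : ℝ) : EReal)) := by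
  intro x z t ht0 ht1
  have h1t : (0:ℝ) ≤ 1 - t := by linarith
  have hA := hfb (T x)
  have hB := hfb (T z)
  calc (c : EReal) * f (T (t • x + (1-t) • z)) - ((ℓ (t • x + (1-t) • z) : ℝ) : EReal)
      ≤ (c : EReal) * ((t : EReal) * f (T x) + ((1-t : ℝ) : EReal) * f (T z))
          - ((t * ℓ x + (1-t) * ℓ z : ℝ) : EReal) := by
        rw [hT, hℓ]
        exact sub_le_sub_real
          (mul_le_mul_of_nonneg_left (hf (T x) (T z) t ht0 ht1)
            (by exact_mod_cast hc.le : (0:EReal) ≤ (c:EReal))) _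
    _ = (t : EReal) * ((c : EReal) * f (T x) - ((ℓ x : ℝ) : EReal))
          + ((1-t : ℝ) : EReal) * ((c : EReal) * f (T z) - ((ℓ z : ℝ) : EReal)) := by
        rw [cmul_add hc (tmul_ne_bot ht0 hA) (tmul_ne_bot h1t hB),
          cmul_sub_real ht0, cmul_sub_real h1t, add_sub_add,
          coe_smul_comm c t, coe_smul_comm c (1-t)]

lemma lsc_transform {X Y : Type*} [TopologicalSpace X] [TopologicalSpace Y]
    (f : Y → EReal) (hf : LowerSemicontinuous f) (hfb : ∀ y, f y ≠ ⊥)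
    {c : ℝ} (hc : 0 < c) (T : X → Y) (hT : Continuous T)
    (ℓ : X → ℝ) (hℓ : Continuous ℓ) :
    LowerSemicontinuous (fun x => (c : EReal) * f (T x) - ((ℓ x : ℝ) : EReal)) :=
  lsc_sub_cont (lsc_cmul hc (hf.comp hT)) (fun z => cmul_ne_bot hc (hfb _)) hℓ

end ETmp2

theorem time_discretised_plastic_bipotential {n : ℕ}
    (bp : ↥(SymMat n) → ↥(SymMat n) → EReal) (hbp : IsBipotential (symPair n) bp)
    (Δt : ℝ) (hΔt : 0 < Δt) (σk : ↥(SymMat n)) :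
    IsBipotential (symPair n)
      (fun Δε Δσ => ((Δt : ℝ) : EReal) * bp ((1 / Δt) • Δε) (σk + Δσ)
          - ((symPair n Δε σk : ℝ) : EReal)) ∧
      ∀ Δε Δσ,
        ((1 / Δt) • Δε ∈ SubdiffSnd (symPair n) (bp ((1 / Δt) • Δε)) (σk + Δσ) ↔
          Δε ∈ SubdiffSnd (symPair n)
            (fun Δσ' => ((Δt : ℝ) : EReal) * bp ((1 / Δt) • Δε) (σk + Δσ')
              - ((symPair n Δε σk : ℝ) : EReal)) Δσ) := by
  have hne : Δt ≠ 0 := hΔt.ne'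
  have hEd : ∀ x : ↥(SymMat n), Δt • ((1/Δt) • x) = x := by
    intro x; rw [smul_smul, mul_one_div, div_self hne, one_smul]
  have hDe : ∀ x : ↥(SymMat n), (1/Δt) • (Δt • x) = x := by
    intro x; rw [smul_smul, one_div, inv_mul_cancel₀ hne, one_smul]
  have hpairs : ∀ a b : ↥(SymMat n),
      (symPair n (Δt • a) b : ℝ) = Δt * (symPair n a b : ℝ) := by
    intro a b; rw [map_smul]; rfl
  have hpair2 : ∀ (a b : ↥(SymMat n)),
      (symPair n a b : ℝ) = Δt * (symPair n ((1/Δt) • a) b : ℝ) := by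
    intro a b
    conv_lhs => rw [← hEd a]
    rw [hpairs]
  have hkeyR : ∀ Δε Δσ : ↥(SymMat n),
      Δt * (symPair n ((1/Δt) • Δε) (σk + Δσ) : ℝ) - (symPair n Δε σk : ℝ)
        = (symPair n Δε Δσ : ℝ) := by
    intro Δε Δσ
    rw [← hpairs, hEd, map_add]
    ring
  have hbk_ne_bot : ∀ Δε Δσ : ↥(SymMat n),
      ((Δt : ℝ) : EReal) * bp ((1/Δt) • Δε) (σk + Δσ) - ((symPair n Δε σk : ℝ) : EReal) ≠ ⊥ :=
    fun Δε Δσ => ETmp.sub_real_ne_bot (ETmp.cmul_ne_bot hΔt (hbp.ne_bot _ _)) _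
  -- the main equivalence of second-variable subdifferential conditions
  have hsnd : ∀ Δε Δσ : ↥(SymMat n),
      ((1 / Δt) • Δε ∈ SubdiffSnd (symPair n) (bp ((1 / Δt) • Δε)) (σk + Δσ) ↔
        Δε ∈ SubdiffSnd (symPair n)
          (fun Δσ' => ((Δt : ℝ) : EReal) * bp ((1 / Δt) • Δε) (σk + Δσ')
            - ((symPair n Δε σk : ℝ) : EReal)) Δσ) := by
    intro Δε Δσ
    simp only [SubdiffSnd, Set.mem_setOf_eq]
    by_cases hB : bp ((1/Δt) • Δε) (σk + Δσ) = ⊤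
    · constructor
      · intro h
        exfalso
        have h0 := h (σk + Δσ)
        rw [sub_self, map_zero, hB, EReal.sub_top] at h0
        exact absurd h0 (by simp)
      · intro h
        exfalso
        have h0 := h Δσ
        rw [sub_self, map_zero, hB, EReal.coe_mul_top_of_pos hΔt, EReal.top_sub_coe,
          EReal.sub_top] at h0
        exact absurd h0 (by simp)
    · obtain ⟨β, hβ⟩ : ∃ β : ℝ, bp ((1/Δt) • Δε) (σk + Δσ) = (β : EReal) :=
        ⟨_, (EReal.coe_toReal hB (hbp.ne_bot _ _)).symm⟩
      rw [hβ]
      have keyw : ∀ v : ↥(SymMat n),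
          ((((symPair n Δε (v - Δσ) : ℝ)) : EReal) ≤
            (((Δt : ℝ) : EReal) * bp ((1/Δt) • Δε) (σk + v) - ((symPair n Δε σk : ℝ) : EReal))
              - (((Δt : ℝ) : EReal) * (β : EReal) - ((symPair n Δε σk : ℝ) : EReal)) ↔
          (((symPair n ((1/Δt) • Δε) ((σk + v) - (σk + Δσ)) : ℝ)) : EReal) ≤
            bp ((1/Δt) • Δε) (σk + v) - (β : EReal)) := by
        intro v
        rw [show ((Δt : ℝ) : EReal) * (β : EReal) - ((symPair n Δε σk : ℝ) : EReal)
            = ((Δt * β - symPair n Δε σk : ℝ) : EReal) from by norm_cast,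
          ETmp.sub_sub_real]
        refine ETmp2.shift_iff hΔt rfl ?_
        have h4 : (σk + v) - (σk + Δσ) = v - Δσ := by abel
        rw [h4, hpair2 Δε (v - Δσ)]
        ring
      constructor
      · intro h v
        exact (keyw v).mpr (h (σk + v))
      · intro h w
        have h3 := (keyw (w - σk)).mp (h (w - σk))
        rw [show σk + (w - σk) = w from by abel] at h3
        exact h3
  -- equivalence of first-variable subdifferential conditions
  have hfst : ∀ Δε Δσ : ↥(SymMat n),
      (Δσ ∈ SubdiffFst (symPair n)
          (fun Δε' => ((Δt : ℝ) : EReal) * bp ((1 / Δt) • Δε') (σk + Δσ)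
            - ((symPair n Δε' σk : ℝ) : EReal)) Δε ↔
        (σk + Δσ) ∈ SubdiffFst (symPair n) (fun x => bp x (σk + Δσ)) ((1/Δt) • Δε)) := by
    intro Δε Δσ
    simp only [SubdiffFst, Set.mem_setOf_eq]
    by_cases hB : bp ((1/Δt) • Δε) (σk + Δσ) = ⊤
    · constructor
      · intro h
        exfalso
        have h0 := h Δε
        rw [sub_self, map_zero, LinearMap.zero_apply, hB, EReal.coe_mul_top_of_pos hΔt,
          EReal.top_sub_coe, EReal.sub_top] at h0
        exact absurd h0 (by simp)
      · intro h
        exfalso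
        have h0 := h ((1/Δt) • Δε)
        rw [sub_self, map_zero, LinearMap.zero_apply, hB, EReal.sub_top] at h0
        exact absurd h0 (by simp)
    · obtain ⟨β, hβ⟩ : ∃ β : ℝ, bp ((1/Δt) • Δε) (σk + Δσ) = (β : EReal) :=
        ⟨_, (EReal.coe_toReal hB (hbp.ne_bot _ _)).symm⟩
      rw [hβ]
      have keyz : ∀ z : ↥(SymMat n),
          ((((symPair n (Δt • z - Δε) Δσ : ℝ)) : EReal) ≤
            (((Δt : ℝ) : EReal) * bp z (σk + Δσ) - ((symPair n (Δt • z) σk : ℝ) : EReal))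
              - (((Δt : ℝ) : EReal) * (β : EReal) - ((symPair n Δε σk : ℝ) : EReal)) ↔
          (((symPair n (z - (1/Δt) • Δε) (σk + Δσ) : ℝ)) : EReal) ≤
            bp z (σk + Δσ) - (β : EReal)) := by
        intro z
        rw [show ((Δt : ℝ) : EReal) * (β : EReal) - ((symPair n Δε σk : ℝ) : EReal)
            = ((Δt * β - symPair n Δε σk : ℝ) : EReal) from by norm_cast,
          ETmp.sub_sub_real]
        refine ETmp2.shift_iff hΔt rfl ?_
        have h5 : Δt • z - Δε = Δt • (z - (1/Δt) • Δε) := by rw [smul_sub, hEd]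
        rw [h5, hpairs, hpairs, hpair2 Δε σk]
        simp only [map_sub, map_add, LinearMap.sub_apply]
        ring
      constructor
      · intro h z
        have h0 := h (Δt • z)
        rw [show (1/Δt) • (Δt • z) = z from hDe z] at h0
        exact (keyz z).mp h0
      · intro h z
        have h1 := (keyz ((1/Δt) • z)).mpr (h ((1/Δt) • z))
        rw [hEd z] at h1
        exact h1
  have hTcont : Continuous fun x : ↥(SymMat n) => (1/Δt) • x := by
    exact continuous_const_smul _
  have hAcont : Continuous fun x : ↥(SymMat n) => σk + x := by
    exact continuous_const.add continuous_id
  have hlcont : ∀ b : ↥(SymMat n), Continuous fun x : ↥(SymMat n) => (symPair n x b : ℝ) := by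
    intro b
    exact (continuous_subtype_val.matrix_mul continuous_const).matrix_trace
  refine ⟨⟨fun Δε Δσ => hbk_ne_bot Δε Δσ, ?_, ?_, ?_, ?_, ?_⟩, hsnd⟩
  · -- convex_lsc_fst
    intro Δσ hx
    obtain ⟨x0, hx0⟩ := hx
    have hBne : bp ((1/Δt) • x0) (σk + Δσ) ≠ ⊤ := by
      intro h
      exact hx0 (by rw [h, EReal.coe_mul_top_of_pos hΔt, EReal.top_sub_coe])
    obtain ⟨hconv, hlsc⟩ := hbp.convex_lsc_fst (σk + Δσ) ⟨(1/Δt) • x0, hBne⟩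
    constructor
    · exact ETmp2.convex_transform (fun y => bp y (σk + Δσ)) hconv
        (fun y => hbp.ne_bot _ _) hΔt (fun x => (1/Δt) • x)
        (fun x z t => by module)
        (fun x => (symPair n x σk : ℝ))
        (fun x z t => by
          simp [map_add, map_smul, LinearMap.add_apply, LinearMap.smul_apply, smul_eq_mul])
    · exact ETmp2.lsc_transform (fun y => bp y (σk + Δσ)) hlsc
        (fun y => hbp.ne_bot _ _) hΔt (fun x => (1/Δt) • x) hTcont
        (fun x => (symPair n x σk : ℝ)) (hlcont σk)
  · -- convex_lsc_snd
    intro Δε hy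
    obtain ⟨y0, hy0⟩ := hy
    have hBne : bp ((1/Δt) • Δε) (σk + y0) ≠ ⊤ := by
      intro h
      exact hy0 (by rw [h, EReal.coe_mul_top_of_pos hΔt, EReal.top_sub_coe])
    obtain ⟨hconv, hlsc⟩ := hbp.convex_lsc_snd ((1/Δt) • Δε) ⟨σk + y0, hBne⟩
    constructor
    · exact ETmp2.convex_transform (bp ((1/Δt) • Δε)) hconv
        (fun y => hbp.ne_bot _ _) hΔt (fun Δσ' => σk + Δσ')
        (fun x z t => by module)
        (fun _ => (symPair n Δε σk : ℝ))
        (fun x z t => by ring)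
    · exact ETmp2.lsc_transform (bp ((1/Δt) • Δε)) hlsc
        (fun y => hbp.ne_bot _ _) hΔt (fun Δσ' => σk + Δσ') hAcont
        (fun _ => (symPair n Δε σk : ℝ)) continuous_const
  · -- ge_pair
    intro Δε Δσ
    have h1 := hbp.ge_pair ((1/Δt) • Δε) (σk + Δσ)
    have h2 := mul_le_mul_of_nonneg_left h1
      (show (0:EReal) ≤ ((Δt : ℝ) : EReal) by exact_mod_cast hΔt.le)
    have h3 := ETmp.sub_le_sub_real h2 (symPair n Δε σk)
    refine le_trans (le_of_eq ?_) h3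
    exact_mod_cast (hkeyR Δε Δσ).symm
  · -- subdiff_iff₁
    intro Δε Δσ
    exact (hfst Δε Δσ).trans
      ((hbp.subdiff_iff₁ ((1/Δt) • Δε) (σk + Δσ)).trans (hsnd Δε Δσ))
  · -- subdiff_iff₂
    intro Δε Δσ
    refine ((hsnd Δε Δσ).symm.trans (hbp.subdiff_iff₂ ((1/Δt) • Δε) (σk + Δσ))).trans ?_
    constructor
    · intro h
      show ((Δt : ℝ) : EReal) * bp ((1/Δt) • Δε) (σk + Δσ)
          - ((symPair n Δε σk : ℝ) : EReal) = ((symPair n Δε Δσ : ℝ) : EReal)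
      rw [h]
      exact_mod_cast hkeyR Δε Δσ
    · intro h
      have h3 : ((Δt : ℝ) : EReal) * bp ((1/Δt) • Δε) (σk + Δσ)
            - ((symPair n Δε σk : ℝ) : EReal)
          = ((Δt : ℝ) : EReal) * ((symPair n ((1/Δt) • Δε) (σk + Δσ) : ℝ) : EReal)
            - ((symPair n Δε σk : ℝ) : EReal) := by
        calc ((Δt : ℝ) : EReal) * bp ((1/Δt) • Δε) (σk + Δσ)
              - ((symPair n Δε σk : ℝ) : EReal)
            = ((symPair n Δε Δσ : ℝ) : EReal) := h
          _ = ((Δt : ℝ) : EReal) * ((symPair n ((1/Δt) • Δε) (σk + Δσ) : ℝ) : EReal)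
              - ((symPair n Δε σk : ℝ) : EReal) := by
            exact_mod_cast (hkeyR Δε Δσ).symm
      exact (ETmp.cmul_inj hΔt).mp ((ETmp.sub_real_inj _).mp h3)
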